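/- arXiv:1710.03114 — 3 statements merged into one kernel-verified Lean document; each statement's English description precedes it below -/
import Mathlib

section
/- Let ∑_{k} a_k(z−z₀)^k be a power series whose coefficients satisfy limsup_k |a_k|^{1/k} ≤ 1/R for some R > 0, and let ρ ≥ 1. Then limsup_{n→∞} ( max_{|z−z₀| ≤ ρR} |S_n(z)| )^{1/n} ≤ ρ, where S_n(z) = ∑_{k=0}^{n} a_k (z−z₀)^k. -/
open Filter Metric

/-- The `n`-th partial sum of the power series `∑ a_k (z - z₀)^k`. -/
noncomputable def S (a : ℕ → ℂ) (z₀ : ℂ) (n : ℕ) (z : ℂ) : ℂ :=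
  ∑ k ∈ Finset.range (n + 1), a k * (z - z₀) ^ k

private lemma aux_eventually_le_pow {C d : ℝ} (hC : 0 ≤ C) (hd : 1 < d) :
    ∀ᶠ n : ℕ in atTop, C + n + 1 ≤ d ^ n := by
  have h1 : ((↑) : ℕ → ℝ) =o[atTop] fun n : ℕ => d ^ n :=
    isLittleO_coe_const_pow_of_one_lt hd
  have h2 : (fun _ : ℕ => C + 1) =o[atTop] fun n : ℕ => d ^ n := by
    refine Asymptotics.isLittleO_const_left.2 (Or.inr ?_)
    have h3 : Tendsto (fun n : ℕ => d ^ n) atTop atTop :=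
      tendsto_pow_atTop_atTop_of_one_lt hd
    convert h3 using 1
    funext n
    simp [Function.comp, Real.norm_eq_abs,
      abs_of_pos (show (0:ℝ) < d by linarith)]
  filter_upwards [Asymptotics.isLittleO_iff.mp (h2.add h1) one_pos] with n hn
  have hd0 : (0 : ℝ) < d ^ n := pow_pos (by linarith) n
  have h5 : |C + 1 + (n : ℝ)| ≤ 1 * |d ^ n| := hn
  rw [one_mul, abs_of_pos hd0, abs_of_nonneg (by positivity)] at h5
  linarith

private lemma continuous_S (a : ℕ → ℂ) (z₀ : ℂ) (n : ℕ) : Continuous (S a z₀ n) := by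
  unfold S
  exact continuous_finset_sum _ fun k _ =>
    continuous_const.mul ((continuous_id.sub continuous_const).pow k)

private lemma bddAbove_S (a : ℕ → ℂ) (z₀ : ℂ) (n : ℕ) (r : ℝ) :
    BddAbove ((fun z => ‖S a z₀ n z‖) '' closedBall z₀ r) :=
  (isCompact_closedBall z₀ r).bddAbove_image (continuous_S a z₀ n).norm.continuousOn

private lemma sSup_S_nonneg (a : ℕ → ℂ) (z₀ : ℂ) (n : ℕ) (r : ℝ) :
    0 ≤ sSup ((fun z => ‖S a z₀ n z‖) '' closedBall z₀ r) := by
  apply Real.sSup_nonneg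
  rintro x ⟨z, _, rfl⟩
  exact norm_nonneg _

/-- Cauchy-type estimate via roots of unity: the leading coefficient of the partial sum is
controlled by the sup of the partial sum on a circle. -/
private lemma coeff_bound (a : ℕ → ℂ) (z₀ : ℂ) (n : ℕ) {r : ℝ} (hr : 0 < r) :
    ‖a n‖ * r ^ n ≤ sSup ((fun z => ‖S a z₀ n z‖) '' closedBall z₀ r) := by
  set M := sSup ((fun z => ‖S a z₀ n z‖) '' closedBall z₀ r) with hM
  set ω : ℂ := Complex.exp (2 * Real.pi * Complex.I / (n + 1)) with hωdef
  have hprim : IsPrimitiveRoot ω (n + 1) := by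
    have h := Complex.isPrimitiveRoot_exp (n + 1) (Nat.succ_ne_zero n)
    rw [hωdef]
    convert h using 3
    push_cast
    ring
  have hωnorm : ‖ω‖ = 1 := by
    have h : ω = Complex.exp ((2 * Real.pi / (n + 1) : ℝ) * Complex.I) := by
      rw [hωdef]; push_cast; ring
    rw [h, Complex.norm_exp_ofReal_mul_I]
  have hmem : ∀ j : ℕ, z₀ + (r : ℂ) * ω ^ j ∈ closedBall z₀ r := by
    intro j
    rw [mem_closedBall, dist_eq_norm]
    have h : z₀ + (r : ℂ) * ω ^ j - z₀ = (r : ℂ) * ω ^ j := by ring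
    rw [h, norm_mul, norm_pow, hωnorm, one_pow, mul_one, Complex.norm_real,
      Real.norm_eq_abs, abs_of_pos hr]
  have key : ∑ j ∈ Finset.range (n + 1), S a z₀ n (z₀ + (r : ℂ) * ω ^ j) * ω ^ j
      = (n + 1 : ℂ) * (a n * (r : ℂ) ^ n) := by
    have expand : ∀ j : ℕ, S a z₀ n (z₀ + (r : ℂ) * ω ^ j) * ω ^ j
        = ∑ k ∈ Finset.range (n + 1), a k * (r : ℂ) ^ k * (ω ^ (k + 1)) ^ j := by
      intro j
      rw [S, Finset.sum_mul]
      refine Finset.sum_congr rfl fun k _ => ?_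
      have h1 : z₀ + (r : ℂ) * ω ^ j - z₀ = (r : ℂ) * ω ^ j := by ring
      have h2 : (ω ^ (k + 1)) ^ j = ω ^ (j * k) * ω ^ j := by
        rw [← pow_mul, ← pow_add]
        congr 1
        ring
      rw [h1, mul_pow, ← pow_mul, h2]
      ring
    simp_rw [expand]
    rw [Finset.sum_comm]
    have hzero : ∀ k ∈ Finset.range (n + 1), k ≠ n →
        (∑ j ∈ Finset.range (n + 1), a k * (r : ℂ) ^ k * (ω ^ (k + 1)) ^ j) = 0 := by
      intro k hk hkn
      rw [← Finset.mul_sum]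
      have hk' : k < n := lt_of_le_of_ne (Nat.lt_succ_iff.mp (Finset.mem_range.mp hk)) hkn
      have hne : ω ^ (k + 1) ≠ 1 :=
        hprim.pow_ne_one_of_pos_of_lt (Nat.succ_ne_zero k) (by omega)
      have hone : (ω ^ (k + 1)) ^ (n + 1) = 1 := by
        rw [← pow_mul, mul_comm, pow_mul, hprim.pow_eq_one, one_pow]
      rw [geom_sum_eq hne, hone, sub_self, zero_div, mul_zero]
    rw [Finset.sum_eq_single_of_mem n (Finset.self_mem_range_succ n) hzero]
    have hone : ∀ j : ℕ, (ω ^ (n + 1)) ^ j = 1 := fun j => by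
      rw [hprim.pow_eq_one, one_pow]
    simp only [hone, mul_one, Finset.sum_const, Finset.card_range, nsmul_eq_mul]
    push_cast
    ring
  have hMle : ∀ j ∈ Finset.range (n + 1),
      ‖S a z₀ n (z₀ + (r : ℂ) * ω ^ j) * ω ^ j‖ ≤ M := by
    intro j _
    rw [norm_mul, norm_pow, hωnorm, one_pow, mul_one]
    exact le_csSup (bddAbove_S a z₀ n r) ⟨_, hmem j, rfl⟩
  have hnorm : (n + 1 : ℝ) * (‖a n‖ * r ^ n) ≤ (n + 1 : ℝ) * M := by
    calc (n + 1 : ℝ) * (‖a n‖ * r ^ n) = ‖(n + 1 : ℂ) * (a n * (r : ℂ) ^ n)‖ := by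
          rw [norm_mul, norm_mul, norm_pow, Complex.norm_real, Real.norm_eq_abs,
            abs_of_pos hr, show ((n : ℂ) + 1) = ((n + 1 : ℕ) : ℂ) by push_cast; ring,
            Complex.norm_natCast]
          push_cast
          ring
      _ = ‖∑ j ∈ Finset.range (n + 1), S a z₀ n (z₀ + (r : ℂ) * ω ^ j) * ω ^ j‖ := by
          rw [key]
      _ ≤ ∑ j ∈ Finset.range (n + 1), ‖S a z₀ n (z₀ + (r : ℂ) * ω ^ j) * ω ^ j‖ :=
          norm_sum_le _ _
      _ ≤ ∑ _j ∈ Finset.range (n + 1), M := Finset.sum_le_sum hMle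
      _ = (n + 1 : ℝ) * M := by
          rw [Finset.sum_const, Finset.card_range, nsmul_eq_mul]
          push_cast
          ring
  have hn1 : (0 : ℝ) < (n : ℝ) + 1 := by positivity
  exact le_of_mul_le_mul_left hnorm hn1

private lemma S_le_sum (a : ℕ → ℂ) (z₀ : ℂ) (n : ℕ) {r : ℝ} {z : ℂ}
    (hz : z ∈ closedBall z₀ r) :
    ‖S a z₀ n z‖ ≤ ∑ k ∈ Finset.range (n + 1), ‖a k‖ * r ^ k := by
  rw [S]
  refine (norm_sum_le _ _).trans (Finset.sum_le_sum fun k _ => ?_)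
  rw [norm_mul, norm_pow]
  have hzr : ‖z - z₀‖ ≤ r := by rwa [mem_closedBall, dist_eq_norm] at hz
  gcongr

theorem limsup_sup_partial_sums_le (a : ℕ → ℂ) (z₀ : ℂ) (R : ℝ) (hR : 0 < R)
    (hcoef : Filter.limsup (fun k : ℕ => ‖a k‖ ^ (1 / (k : ℝ))) Filter.atTop ≤ 1 / R)
    (ρ : ℝ) (hρ : 1 ≤ ρ) :
    Filter.limsup
      (fun n : ℕ =>
        (sSup ((fun z => ‖S a z₀ n z‖) '' closedBall z₀ (ρ * R))) ^ (1 / (n : ℝ)))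
      Filter.atTop ≤ ρ := by
  have hrρ : 0 < ρ * R := mul_pos (by linarith) hR
  set r : ℝ := ρ * R with hrdef
  set F : ℕ → ℝ := fun n : ℕ =>
    (sSup ((fun z => ‖S a z₀ n z‖) '' closedBall z₀ r)) ^ (1 / (n : ℝ)) with hFdef
  have hFnonneg : ∀ n, 0 ≤ F n := fun n =>
    Real.rpow_nonneg (sSup_S_nonneg a z₀ n r) _
  by_cases hA : ∃ x : ℝ, ∀ᶠ n in atTop, F n ≤ x
  · obtain ⟨x, hx⟩ := hA
    -- the coefficient sequence is bounded
    have hGb : IsBoundedUnder (· ≤ ·) atTop (fun k : ℕ => ‖a k‖ ^ (1 / (k : ℝ))) := by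
      refine ⟨x / r, ?_⟩
      rw [eventually_map]
      filter_upwards [hx, eventually_ge_atTop 1] with n hn hn1
      have h1 : ‖a n‖ * r ^ n ≤ sSup ((fun z => ‖S a z₀ n z‖) '' closedBall z₀ r) :=
        coeff_bound a z₀ n hrρ
      have h2 : (‖a n‖ * r ^ n) ^ (1 / (n : ℝ)) ≤ F n :=
        Real.rpow_le_rpow (by positivity) h1 (by positivity)
      rw [Real.mul_rpow (norm_nonneg _) (by positivity), one_div,
        Real.pow_rpow_inv_natCast hrρ.le (by omega), ← one_div] at h2
      exact (le_div_iff₀ hrρ).2 (h2.trans hn)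
    refine le_of_forall_gt_imp_ge_of_dense fun b hb => ?_
    have hρ0 : (0 : ℝ) < ρ := by linarith
    have hb1 : 1 < b / ρ := (one_lt_div hρ0).2 hb
    set c : ℝ := Real.sqrt (b / ρ) with hcdef
    have hcc : c * c = b / ρ := Real.mul_self_sqrt (by linarith)
    have hc1 : 1 < c := by nlinarith [Real.sqrt_nonneg (b / ρ)]
    have hcρ : 1 ≤ c * ρ := by nlinarith
    have hlt : (1 : ℝ) / R < c / R := by
      rw [div_lt_div_iff₀ hR hR]
      nlinarith
    have hev := eventually_lt_of_limsup_lt (lt_of_le_of_lt hcoef hlt) hGb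
    obtain ⟨N, hN⟩ := eventually_atTop.mp (hev.and (eventually_ge_atTop 1))
    have hak : ∀ k, N ≤ k → ‖a k‖ * r ^ k ≤ (c * ρ) ^ k := by
      intro k hk
      obtain ⟨h1, hk1⟩ := hN k hk
      have h4 : (‖a k‖ ^ (1 / (k : ℝ))) ^ k ≤ (c / R) ^ k :=
        pow_le_pow_left₀ (Real.rpow_nonneg (norm_nonneg _) _) h1.le k
      rw [one_div, Real.rpow_inv_natCast_pow (norm_nonneg _) (by omega : k ≠ 0)] at h4
      calc ‖a k‖ * r ^ k ≤ (c / R) ^ k * (ρ * R) ^ k :=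
            mul_le_mul_of_nonneg_right h4 (by positivity)
        _ = (c * ρ) ^ k := by
            rw [← mul_pow]
            congr 1
            field_simp
    set C : ℝ := ∑ k ∈ Finset.range N, ‖a k‖ * r ^ k with hCdef
    have hC0 : 0 ≤ C := Finset.sum_nonneg fun k _ => by positivity
    have hsup : ∀ᶠ n in atTop, F n ≤ b := by
      filter_upwards [eventually_ge_atTop (max N 1), aux_eventually_le_pow hC0 hc1]
        with n hn hpow
      have hnN : N ≤ n := le_trans (le_max_left _ _) hn
      have hn1 : 1 ≤ n := le_trans (le_max_right _ _) hn
      have hsum : ∑ k ∈ Finset.range (n + 1), ‖a k‖ * r ^ k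
          ≤ C + ((n : ℝ) + 1) * (c * ρ) ^ n := by
        rw [← Finset.sum_range_add_sum_Ico _ (by omega : N ≤ n + 1)]
        refine add_le_add_right ?_ C
        have h6 : ∑ k ∈ Finset.Ico N (n + 1), ‖a k‖ * r ^ k
            ≤ ∑ _k ∈ Finset.Ico N (n + 1), (c * ρ) ^ n := by
          refine Finset.sum_le_sum fun k hk => ?_
          obtain ⟨hk1, hk2⟩ := Finset.mem_Ico.mp hk
          exact (hak k hk1).trans (pow_le_pow_right₀ hcρ (by omega))
        refine h6.trans ?_
        rw [Finset.sum_const, Nat.card_Ico, nsmul_eq_mul]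
        have h7 : ((n + 1 - N : ℕ) : ℝ) ≤ (n : ℝ) + 1 := by
          have : (n + 1 - N : ℕ) ≤ n + 1 := Nat.sub_le _ _
          exact_mod_cast this
        exact mul_le_mul_of_nonneg_right h7 (by positivity)
      have hb0 : (0 : ℝ) ≤ b := by linarith
      have hsup2 : sSup ((fun z => ‖S a z₀ n z‖) '' closedBall z₀ r) ≤ b ^ n := by
        apply Real.sSup_le
        · rintro y ⟨z, hz, rfl⟩
          refine (S_le_sum a z₀ n hz).trans (hsum.trans ?_)
          have h5 : (1 : ℝ) ≤ (c * ρ) ^ n := one_le_pow₀ hcρ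
          have h8 : 0 ≤ C * ((c * ρ) ^ n - 1) :=
            mul_nonneg hC0 (sub_nonneg.2 h5)
          calc C + ((n : ℝ) + 1) * (c * ρ) ^ n
              ≤ (C + (n : ℝ) + 1) * (c * ρ) ^ n := by nlinarith
            _ ≤ c ^ n * (c * ρ) ^ n :=
                mul_le_mul_of_nonneg_right hpow (by positivity)
            _ = (c * (c * ρ)) ^ n := (mul_pow _ _ _).symm
            _ = b ^ n := by
                congr 1
                rw [← mul_assoc, hcc]
                field_simp
        · exact pow_nonneg hb0 n
      calc F n ≤ (b ^ n) ^ (1 / (n : ℝ)) :=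
            Real.rpow_le_rpow (sSup_S_nonneg a z₀ n r) hsup2 (by positivity)
        _ = b := by rw [one_div, Real.pow_rpow_inv_natCast hb0 (by omega)]
    have hcb : IsBoundedUnder (· ≥ ·) atTop F :=
      ⟨0, eventually_map.2 (Eventually.of_forall fun n => hFnonneg n)⟩
    exact limsup_le_of_le hcb.isCoboundedUnder_le hsup
  · have hempty : {x : ℝ | ∀ᶠ n in atTop, F n ≤ x} = ∅ := by
      rw [Set.eq_empty_iff_forall_notMem]
      intro x hxmem
      exact hA ⟨x, hxmem⟩
    rw [Filter.limsup_eq, hempty, Real.sInf_empty]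
    linarith
end

section
/- Let ∑_k a_k(z−z₀)^k be a power series with radius of convergence exactly R ∈ (0,∞), ρ ≥ 1, and suppose limsup_{n→∞} ( max_{|z−z₀| ≤ ρR} |S_n(z)| )^{1/n} < ρ, where S_n is the n-th partial sum. Then a contradiction follows; equivalently, limsup_{n→∞} ( max_{|z−z₀| ≤ ρR} |S_n(z)| )^{1/n} ≥ ρ. -/
set_option maxHeartbeats 1000000

open Filter Metric

private lemma rpow_aux_le {x B : ℝ} {n : ℕ} (hn : 1 ≤ n) (hx : 0 ≤ x) (hB : 0 ≤ B)
    (h : x ≤ B ^ n) : x ^ (1 / (n : ℝ)) ≤ B := by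
  have hn' : (n : ℝ) ≠ 0 := Nat.cast_ne_zero.2 (by omega)
  calc x ^ (1 / (n : ℝ)) ≤ (B ^ n) ^ (1 / (n : ℝ)) :=
        Real.rpow_le_rpow hx h (by positivity)
    _ = B := by
        rw [← Real.rpow_natCast B n, ← Real.rpow_mul hB]
        rw [mul_one_div, div_self hn', Real.rpow_one]

private lemma rpow_aux_ge {x b : ℝ} {n : ℕ} (hn : 1 ≤ n) (hb : 0 ≤ b)
    (h : b ^ n ≤ x) : b ≤ x ^ (1 / (n : ℝ)) := by
  have hn' : (n : ℝ) ≠ 0 := Nat.cast_ne_zero.2 (by omega)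
  calc b = (b ^ n) ^ (1 / (n : ℝ)) := by
        rw [← Real.rpow_natCast b n, ← Real.rpow_mul hb, mul_one_div, div_self hn',
          Real.rpow_one]
    _ ≤ x ^ (1 / (n : ℝ)) := Real.rpow_le_rpow (by positivity) h (by positivity)

private lemma rpow_aux_pow_le {x C : ℝ} {n : ℕ} (hn : 1 ≤ n) (hx : 0 ≤ x)
    (h : x ^ (1 / (n : ℝ)) ≤ C) : x ≤ C ^ n := by
  have hn' : (n : ℝ) ≠ 0 := Nat.cast_ne_zero.2 (by omega)
  calc x = (x ^ (1 / (n : ℝ))) ^ n := by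
        rw [← Real.rpow_natCast (x ^ (1 / (n : ℝ))) n, ← Real.rpow_mul hx, one_div,
          inv_mul_cancel₀ hn', Real.rpow_one]
    _ ≤ C ^ n := pow_le_pow_left₀ (Real.rpow_nonneg hx _) h n

/-- The max of `‖S_n‖` on the closed ball of radius `r`. -/
noncomputable def Msup (a : ℕ → ℂ) (z₀ : ℂ) (r : ℝ) (n : ℕ) : ℝ :=
  sSup ((fun z => ‖S a z₀ n z‖) '' closedBall z₀ r)

theorem limsup_sup_partial_sums_ge (a : ℕ → ℂ) (z₀ : ℂ) (R : ℝ) (hR : 0 < R)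
    (hcoef : Filter.limsup (fun k : ℕ => ‖a k‖ ^ (1 / (k : ℝ))) Filter.atTop = 1 / R)
    (ρ : ℝ) (hρ : 1 ≤ ρ) :
    Filter.limsup
      (fun n : ℕ =>
        (sSup ((fun z => ‖S a z₀ n z‖) '' closedBall z₀ (ρ * R))) ^ (1 / (n : ℝ)))
      Filter.atTop ≥ ρ := by
  show Filter.limsup (fun n : ℕ => (Msup a z₀ (ρ * R) n) ^ (1 / (n : ℝ))) Filter.atTop ≥ ρ
  set r : ℝ := ρ * R with hr_def
  have hr0 : 0 < r := by positivity
  set M : ℕ → ℝ := Msup a z₀ r with hM_def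
  set u : ℕ → ℝ := fun n => M n ^ (1 / (n : ℝ)) with hu_def
  -- basic facts about M
  have hcont : ∀ n, Continuous fun z : ℂ => ‖S a z₀ n z‖ := by
    intro n
    apply Continuous.norm
    exact continuous_finset_sum _ fun k _ =>
      continuous_const.mul ((continuous_id.sub continuous_const).pow k)
  have hM_ge : ∀ n, ∀ z ∈ closedBall z₀ r, ‖S a z₀ n z‖ ≤ M n := by
    intro n z hz
    exact le_csSup (((isCompact_closedBall z₀ r).image (hcont n)).bddAbove) ⟨z, hz, rfl⟩
  have hM0 : ∀ n, 0 ≤ M n := fun n =>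
    (norm_nonneg _).trans (hM_ge n z₀ (mem_closedBall_self hr0.le))
  -- the coefficient bound : ‖a (n+1)‖ * r^(n+1) ≤ M (n+1) + M n
  have hAB : ∀ n : ℕ, ‖a (n + 1)‖ * r ^ (n + 1) ≤ M (n + 1) + M n := by
    intro n
    have hz : z₀ + (r : ℂ) ∈ closedBall z₀ r := by
      simp [mem_closedBall, dist_eq_norm, abs_of_nonneg hr0.le]
    have key : a (n + 1) * ((z₀ + (r : ℂ)) - z₀) ^ (n + 1)
        = S a z₀ (n + 1) (z₀ + (r : ℂ)) - S a z₀ n (z₀ + (r : ℂ)) := by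
      simp [S, Finset.sum_range_succ]
    have h1 : ‖a (n + 1)‖ * r ^ (n + 1)
        = ‖a (n + 1) * ((z₀ + (r : ℂ)) - z₀) ^ (n + 1)‖ := by
      rw [norm_mul, norm_pow]
      congr 2
      simp [abs_of_nonneg hr0.le]
    rw [h1, key]
    exact (norm_sub_le _ _).trans
      (add_le_add (hM_ge _ _ hz) (hM_ge _ _ hz))
  -- extract info from hcoef
  rw [Filter.limsup_eq] at hcoef
  set sSet : Set ℝ := {x : ℝ | ∀ᶠ k : ℕ in atTop, ‖a k‖ ^ (1 / (k : ℝ)) ≤ x} with hsSet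
  have hv0 : ∀ k : ℕ, 0 ≤ ‖a k‖ ^ (1 / (k : ℝ)) := fun k => Real.rpow_nonneg (norm_nonneg _) _
  have hbddBelow : BddBelow sSet := by
    refine ⟨0, fun x hx => ?_⟩
    obtain ⟨k, hk⟩ := hx.exists
    exact (hv0 k).trans hk
  have hne : sSet.Nonempty := by
    by_contra h
    rw [Set.not_nonempty_iff_eq_empty] at h
    rw [h, Real.sInf_empty] at hcoef
    have : (0 : ℝ) < 1 / R := by positivity
    rw [← hcoef] at this
    exact lt_irrefl _ this
  have hfreq : ∀ c : ℝ, c < 1 / R → ∃ᶠ k : ℕ in atTop, c < ‖a k‖ ^ (1 / (k : ℝ)) := by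
    intro c hc
    by_contra h
    rw [Filter.not_frequently] at h
    have hmem : c ∈ sSet := h.mono fun k hk => by simpa using hk
    have := csInf_le hbddBelow hmem
    rw [hcoef] at this
    linarith
  -- boundedness of u
  obtain ⟨C₀, hC₀⟩ := hne
  have hC : ∀ᶠ k : ℕ in atTop, ‖a k‖ ^ (1 / (k : ℝ)) ≤ max C₀ 0 :=
    hC₀.mono fun k h => h.trans (le_max_left _ _)
  set C : ℝ := max C₀ 0 with hC_def
  have hC0 : 0 ≤ C := le_max_right _ _
  have ha_le : ∀ᶠ k : ℕ in atTop, ‖a k‖ ≤ C ^ k :=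
    (hC.and (eventually_ge_atTop 1)).mono fun k ⟨h1, h2⟩ =>
      rpow_aux_pow_le h2 (norm_nonneg _) h1
  obtain ⟨N, hN⟩ := eventually_atTop.1 ha_le
  set D : ℝ := max (C * r) 1 with hD_def
  have hD1 : (1 : ℝ) ≤ D := le_max_right _ _
  have hD0 : (0 : ℝ) ≤ D := le_trans zero_le_one hD1
  set K : ℝ := ∑ k ∈ Finset.range N, ‖a k‖ * r ^ k with hK_def
  have hK0 : 0 ≤ K :=
    Finset.sum_nonneg fun k _ => mul_nonneg (norm_nonneg _) (by positivity)
  have hMle : ∀ n : ℕ, N ≤ n → M n ≤ (K + n + 1) * D ^ n := by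
    intro n hn
    have hDn1 : (1 : ℝ) ≤ D ^ n := one_le_pow₀ hD1
    refine Real.sSup_le ?_ (by positivity)
    rintro x ⟨z, hz, rfl⟩
    have hzr : ‖z - z₀‖ ≤ r := by
      rw [mem_closedBall, dist_eq_norm] at hz; exact hz
    have h1 : ‖S a z₀ n z‖ ≤ ∑ k ∈ Finset.range (n + 1), ‖a k‖ * r ^ k := by
      refine (norm_sum_le _ _).trans (Finset.sum_le_sum fun k _ => ?_)
      rw [norm_mul, norm_pow]
      exact mul_le_mul_of_nonneg_left (pow_le_pow_left₀ (norm_nonneg _) hzr k) (norm_nonneg _)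
    have hsplit : ∑ k ∈ Finset.range (n + 1), ‖a k‖ * r ^ k
        = K + ∑ k ∈ Finset.Ico N (n + 1), ‖a k‖ * r ^ k := by
      rw [hK_def]
      exact (Finset.sum_range_add_sum_Ico _ (by omega)).symm
    have h2 : ∑ k ∈ Finset.Ico N (n + 1), ‖a k‖ * r ^ k ≤ (n + 1 : ℝ) * D ^ n := by
      have hterm : ∀ k ∈ Finset.Ico N (n + 1), ‖a k‖ * r ^ k ≤ D ^ n := by
        intro k hk
        rw [Finset.mem_Ico] at hk
        calc ‖a k‖ * r ^ k ≤ C ^ k * r ^ k :=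
              mul_le_mul_of_nonneg_right (hN k hk.1) (by positivity)
          _ = (C * r) ^ k := (mul_pow _ _ _).symm
          _ ≤ D ^ k := pow_le_pow_left₀ (by positivity) (le_max_left _ _) k
          _ ≤ D ^ n := pow_le_pow_right₀ hD1 (by omega)
      calc ∑ k ∈ Finset.Ico N (n + 1), ‖a k‖ * r ^ k
          ≤ ∑ _k ∈ Finset.Ico N (n + 1), D ^ n := Finset.sum_le_sum hterm
        _ = ((n + 1 - N : ℕ) : ℝ) * D ^ n := by
            rw [Finset.sum_const, Nat.card_Ico, nsmul_eq_mul]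
        _ ≤ (n + 1 : ℝ) * D ^ n := by
            apply mul_le_mul_of_nonneg_right _ (by positivity)
            push_cast; have : (n + 1 - N : ℕ) ≤ n + 1 := by omega
            exact_mod_cast Nat.cast_le.2 this
    have h3 : ‖S a z₀ n z‖ ≤ K + (n + 1 : ℝ) * D ^ n := by
      rw [hsplit] at h1; linarith
    nlinarith [h3, hK0, hDn1]
  have hu_bdd : IsBoundedUnder (· ≤ ·) atTop u := by
    have hev : ∀ᶠ n : ℕ in atTop, u n ≤ 4 * D := by
      have h2n : ∀ᶠ n : ℕ in atTop, K ≤ 2 ^ n :=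
        (tendsto_pow_atTop_atTop_of_one_lt (by norm_num : (1:ℝ) < 2)).eventually_ge_atTop K
      filter_upwards [h2n, eventually_ge_atTop N, eventually_ge_atTop 1] with n hKn hnN hn1
      have hn1' : (n + 1 : ℝ) ≤ 2 ^ n := by
        exact_mod_cast Nat.succ_le_of_lt (Nat.lt_two_pow_self (n := n))
      have h4 : (2 : ℝ) * 2 ^ n ≤ 4 ^ n := by
        have : (4 : ℝ) ^ n = 2 ^ n * 2 ^ n := by
          rw [← mul_pow]; norm_num
        have h2 : (2 : ℝ) ≤ 2 ^ n := by
          calc (2:ℝ) = 2 ^ 1 := (pow_one 2).symm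
            _ ≤ 2 ^ n := pow_le_pow_right₀ (by norm_num) hn1
        nlinarith [pow_pos (show (0:ℝ) < 2 by norm_num) n]
      have hM4 : M n ≤ (4 * D) ^ n := by
        calc M n ≤ (K + n + 1) * D ^ n := hMle n hnN
          _ ≤ (4 ^ n) * D ^ n := by
              apply mul_le_mul_of_nonneg_right _ (by positivity)
              linarith
          _ = (4 * D) ^ n := (mul_pow _ _ _).symm
      exact rpow_aux_le hn1 (hM0 n) (by positivity) hM4
    exact ⟨4 * D, eventually_map.2 hev⟩
  -- the main claim
  have claim : ∀ b : ℝ, 0 ≤ b → b < ρ → b ≤ Filter.limsup u atTop := by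
    intro b hb hbρ
    rcases hb.eq_or_lt with rfl | hb0
    · exact le_limsup_of_frequently_le
        ((Filter.Eventually.of_forall fun n => Real.rpow_nonneg (hM0 n) _).frequently) hu_bdd
    set c : ℝ := (b / r + 1 / R) / 2 with hc_def
    have hc0 : 0 < c := by positivity
    have hbr : b / r < 1 / R := by
      rw [div_lt_div_iff₀ hr0 hR, hr_def]
      nlinarith
    have hcR : c < 1 / R := by rw [hc_def]; linarith
    have hcr : c * r = (b + ρ) / 2 := by
      rw [hc_def, hr_def]
      field_simp
    set b' : ℝ := c * r with hb'_def
    have hb'b : b < b' := by rw [hcr]; linarith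
    have hb'0 : 0 < b' := hb0.trans hb'b
    have hratio : Tendsto (fun k : ℕ => (b' / b) ^ k) atTop atTop :=
      tendsto_pow_atTop_atTop_of_one_lt ((one_lt_div hb0).2 hb'b)
    have hev : ∀ᶠ k : ℕ in atTop, max 2 (2 / b) ≤ (b' / b) ^ k :=
      hratio.eventually_ge_atTop _
    have hfequ : ∃ᶠ m : ℕ in atTop, b ≤ u m := by
      rw [frequently_atTop]
      intro N₀
      obtain ⟨k, hvk, hevk, hk2⟩ :=
        ((hfreq c hcR).and_eventually (hev.and (eventually_ge_atTop (N₀ + 2)))).exists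
      obtain ⟨j, rfl⟩ : ∃ j, k = j + 1 := ⟨k - 1, by omega⟩
      have hak : c ^ (j + 1) ≤ ‖a (j + 1)‖ := by
        have := rpow_aux_ge (n := j + 1) (by omega) hc0.le (le_refl (c ^ (j + 1)))
        -- use rpow_aux_pow_le on c ≤ v with switched roles
        have h' : c ≤ ‖a (j + 1)‖ ^ (1 / ((j + 1 : ℕ) : ℝ)) := hvk.le
        calc c ^ (j + 1) ≤ (‖a (j + 1)‖ ^ (1 / ((j + 1 : ℕ) : ℝ))) ^ (j + 1) :=
              pow_le_pow_left₀ hc0.le h' (j + 1)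
          _ = ‖a (j + 1)‖ := by
              rw [← Real.rpow_natCast (‖a (j+1)‖ ^ (1 / ((j+1:ℕ):ℝ))) (j+1),
                ← Real.rpow_mul (norm_nonneg _), one_div,
                inv_mul_cancel₀ (by exact_mod_cast Nat.succ_ne_zero j), Real.rpow_one]
      have hsum : b' ^ (j + 1) ≤ M (j + 1) + M j := by
        calc b' ^ (j + 1) = c ^ (j + 1) * r ^ (j + 1) := mul_pow _ _ _
          _ ≤ ‖a (j + 1)‖ * r ^ (j + 1) :=
              mul_le_mul_of_nonneg_right hak (by positivity)
          _ ≤ M (j + 1) + M j := hAB j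
      have hbk : ∀ m : ℕ, (b' / b) ^ m * b ^ m = b' ^ m := by
        intro m; rw [div_pow, div_mul_cancel₀]; positivity
      have h2bk : 2 * b ^ (j + 1) ≤ b' ^ (j + 1) := by
        have h := (le_max_left 2 (2 / b)).trans hevk
        calc 2 * b ^ (j + 1) ≤ (b' / b) ^ (j + 1) * b ^ (j + 1) :=
              mul_le_mul_of_nonneg_right h (by positivity)
          _ = b' ^ (j + 1) := hbk (j + 1)
      have h2bj : 2 * b ^ j ≤ b' ^ (j + 1) := by
        have h := (le_max_right 2 (2 / b)).trans hevk
        have heq : (2 / b) * b ^ (j + 1) = 2 * b ^ j := by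
          rw [pow_succ]
          field_simp
        calc 2 * b ^ j = (2 / b) * b ^ (j + 1) := heq.symm
          _ ≤ (b' / b) ^ (j + 1) * b ^ (j + 1) :=
              mul_le_mul_of_nonneg_right h (by positivity)
          _ = b' ^ (j + 1) := hbk (j + 1)
      rcases le_or_gt (b' ^ (j + 1) / 2) (M (j + 1)) with hcase | hcase
      · refine ⟨j + 1, by omega, ?_⟩
        have : b ^ (j + 1) ≤ M (j + 1) := by linarith
        exact rpow_aux_ge (by omega) hb0.le this
      · refine ⟨j, by omega, ?_⟩
        have hMj : b ^ j ≤ M j := by linarith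
        exact rpow_aux_ge (by omega) hb0.le hMj
    exact le_limsup_of_frequently_le hfequ hu_bdd
  rw [ge_iff_le]
  by_contra hlt
  push_neg at hlt
  rcases lt_or_ge (Filter.limsup u atTop) 0 with h0 | h0
  · have := claim 0 le_rfl (by linarith)
    linarith
  · have := claim ((Filter.limsup u atTop + ρ) / 2) (by linarith) (by linarith)
    linarith
end

section
/- Let z₀ ∈ ℂ, r > 0 with 0 ∉ D(z₀,r), let D_m = closure of D(z₀, r(1−1/m)) for m ≥ 1, (P_j) an enumeration of polynomials with coefficients in ℚ+iℚ, and log a branch of the logarithm on D(z₀,r). Define A(m,j,s) = ∪_{n≥0} { f ∈ H(D(z₀,r)) : sup_{z∈D_m} |T_n(f)(z) − P_j(log z)| < 1/s } and A = ∩_{m,j,s} A(m,j,s). Then A equals the set S(D(z₀,r)) of f for which {T_N(f) : N ≥ 0} is dense in H(D(z₀,r)). -/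
open Filter Metric Polynomial

/-- The `N`-th partial sum of the Taylor expansion of `f` with centre `z`, evaluated at `0`. -/
noncomputable def T (N : ℕ) (f : ℂ → ℂ) (z : ℂ) : ℂ :=
  ∑ k ∈ Finset.range (N + 1), iteratedDeriv k f z / (Nat.factorial k : ℂ) * (-z) ^ k

/-- A polynomial has coefficients in `ℚ + iℚ`. -/
def RatCoeff (P : Polynomial ℂ) : Prop :=
  ∀ n, ∃ a b : ℚ, P.coeff n = (a : ℂ) + (b : ℂ) * Complex.I

-- Sub-lemma 1: polynomial approximation of holomorphic function on compact subset of a ball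
lemma exists_poly_approx {c : ℂ} {R : ℝ} {g : ℂ → ℂ}
    (hg : DifferentiableOn ℂ g (ball c R)) {K : Set ℂ} (hK : IsCompact K)
    (hKs : K ⊆ ball c R) {ε : ℝ} (hε : 0 < ε) :
    ∃ Q : Polynomial ℂ, ∀ z ∈ K, ‖Q.eval z - g z‖ < ε := by
  rcases K.eq_empty_or_nonempty with h | hne
  · exact ⟨0, by simp [h]⟩
  obtain ⟨zm, hzm, hmax⟩ := hK.exists_isMaxOn hne
    ((continuous_id.dist continuous_const).continuousOn)
  set d : ℝ := dist zm c with hd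
  have hd0 : 0 ≤ d := dist_nonneg
  have hdR : d < R := mem_ball.1 (hKs hzm)
  have hR0 : 0 < R := lt_of_le_of_lt hd0 hdR
  set ρ : ℝ := (d + R) / 2 with hρ
  have hρ0 : 0 < ρ := by simp only [hρ]; linarith
  have hdρ : d < ρ := by simp only [hρ]; linarith
  have hρR : ρ < R := by simp only [hρ]; linarith
  set ρ' : NNReal := ⟨ρ, hρ0.le⟩ with hρ'
  have hgd : DifferentiableOn ℂ g (closedBall c ρ') :=
    hg.mono (closedBall_subset_ball hρR)
  have hb := hgd.hasFPowerSeriesOnBall (by exact_mod_cast hρ0)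
  set p := cauchyPowerSeries g c ρ' with hp
  set r' : NNReal := ⟨(d + ρ) / 2, by positivity⟩ with hr'
  have hdr' : d < (r' : ℝ) := by simp only [hr', NNReal.coe_mk]; show d < (d + ρ) / 2; linarith
  have hr'ρ : (r' : ℝ) < ρ := by simp only [hr', NNReal.coe_mk]; show (d + ρ) / 2 < ρ; linarith
  have hlt : (r' : ENNReal) < (ρ' : ENNReal) := by
    rw [ENNReal.coe_lt_coe]
    exact_mod_cast hr'ρ
  have htu := hb.tendstoUniformlyOn' hlt
  rw [Metric.tendstoUniformlyOn_iff] at htu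
  obtain ⟨n, hn⟩ := (htu ε hε).exists
  refine ⟨∑ k ∈ Finset.range n, C (p.coeff k) * (X - C c) ^ k, fun z hz => ?_⟩
  have hzb : z ∈ ball c (r' : ℝ) := by
    have hle : dist z c ≤ d := isMaxOn_iff.1 hmax z hz
    exact mem_ball.2 (lt_of_le_of_lt hle hdr')
  have hQ : Polynomial.eval z (∑ k ∈ Finset.range n, C (p.coeff k) * (X - C c) ^ k)
      = p.partialSum n (z - c) := by
    rw [FormalMultilinearSeries.partialSum]
    rw [Polynomial.eval_finset_sum]
    refine Finset.sum_congr rfl fun k _ => ?_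
    rw [FormalMultilinearSeries.apply_eq_pow_smul_coeff, smul_eq_mul]
    simp [mul_comm]
  rw [hQ]
  have := hn z hzb
  rw [dist_eq_norm] at this
  rw [← norm_neg]
  simpa [neg_sub] using this

-- Sub-lemma 2: polynomial approximation of exp on compact sets
lemma exists_poly_approx_exp {S : Set ℂ} (hS : IsCompact S) {δ : ℝ} (hδ : 0 < δ) :
    ∃ E : Polynomial ℂ, ∀ w ∈ S, ‖E.eval w - Complex.exp w‖ < δ := by
  obtain ⟨M, hM⟩ := hS.isBounded.exists_norm_le
  have hsub : S ⊆ ball 0 (max M 0 + 1) := fun w hw => by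
    simp only [mem_ball, dist_zero_right]
    calc ‖w‖ ≤ M := hM w hw
      _ ≤ max M 0 := le_max_left _ _
      _ < max M 0 + 1 := by linarith
  exact exists_poly_approx (Complex.differentiable_exp.differentiableOn) hS hsub hδ

-- approximate a complex number by a rational one
lemma exists_rat_complex_near (w : ℂ) {η : ℝ} (hη : 0 < η) :
    ∃ a b : ℚ, ‖((a : ℂ) + (b : ℂ) * Complex.I) - w‖ < η := by
  obtain ⟨a, ha⟩ := exists_rat_near w.re (by positivity : 0 < η / 2)
  obtain ⟨b, hb⟩ := exists_rat_near w.im (by positivity : 0 < η / 2)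
  refine ⟨a, b, ?_⟩
  set u : ℂ := ((a : ℂ) + (b : ℂ) * Complex.I) - w with hu
  have hre : u.re = (a : ℝ) - w.re := by simp [hu]
  have him : u.im = (b : ℝ) - w.im := by simp [hu]
  calc ‖u‖ ≤ |u.re| + |u.im| := Complex.norm_le_abs_re_add_abs_im u
    _ < η := by
        rw [hre, him]
        rw [abs_sub_comm w.re _] at ha
        rw [abs_sub_comm w.im _] at hb
        push_cast at ha hb ⊢
        linarith


-- Sub-lemma 3: perturb coefficients to rational ones
lemma exists_ratCoeff_approx (Q : Polynomial ℂ) {S : Set ℂ} {M : ℝ}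
    (hM : ∀ w ∈ S, ‖w‖ ≤ M) {ε : ℝ} (hε : 0 < ε) :
    ∃ P : Polynomial ℂ, RatCoeff P ∧ ∀ w ∈ S, ‖P.eval w - Q.eval w‖ < ε := by
  set d := Q.natDegree with hdQ
  set M' : ℝ := max M 1 with hM'
  have hM'1 : 1 ≤ M' := le_max_right _ _
  have hM'0 : 0 < M' := lt_of_lt_of_le one_pos hM'1
  set B : ℝ := (d + 1 : ℝ) * M' ^ d with hB
  have hB0 : 0 < B := by positivity
  set η : ℝ := ε / (2 * B) with hη
  have hη0 : 0 < η := by positivity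
  have hch : ∀ k : ℕ, ∃ c : ℂ, (∃ a b : ℚ, c = (a : ℂ) + (b : ℂ) * Complex.I) ∧
      ‖c - Q.coeff k‖ < η := fun k => by
    obtain ⟨a, b, hab⟩ := exists_rat_complex_near (Q.coeff k) hη0
    exact ⟨_, ⟨a, b, rfl⟩, hab⟩
  choose cf hcf1 hcf2 using hch
  refine ⟨∑ k ∈ Finset.range (d + 1), monomial k (cf k), ?_, ?_⟩
  · intro n
    rw [Polynomial.finset_sum_coeff]
    simp only [Polynomial.coeff_monomial]
    rw [Finset.sum_ite_eq' (Finset.range (d + 1)) n cf]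
    by_cases hn : n ∈ Finset.range (d + 1)
    · rw [if_pos hn]; exact hcf1 n
    · rw [if_neg hn]; exact ⟨0, 0, by simp⟩
  · intro w hw
    have hwM : ‖w‖ ≤ M' := (hM w hw).trans (le_max_left _ _)
    have heval1 : Polynomial.eval w (∑ k ∈ Finset.range (d + 1), monomial k (cf k))
        = ∑ k ∈ Finset.range (d + 1), cf k * w ^ k := by
      rw [Polynomial.eval_finset_sum]
      exact Finset.sum_congr rfl fun k _ => by rw [Polynomial.eval_monomial]
    have heval2 : Q.eval w = ∑ k ∈ Finset.range (d + 1), Q.coeff k * w ^ k :=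
      Polynomial.eval_eq_sum_range w
    rw [heval1, heval2, ← Finset.sum_sub_distrib]
    have hbound : ∀ k ∈ Finset.range (d + 1),
        ‖cf k * w ^ k - Q.coeff k * w ^ k‖ ≤ η * M' ^ d := by
      intro k hk
      rw [← sub_mul, norm_mul, norm_pow]
      have h1 : ‖w‖ ^ k ≤ M' ^ k := pow_le_pow_left₀ (norm_nonneg w) hwM k
      have h2 : M' ^ k ≤ M' ^ d :=
        pow_le_pow_right₀ hM'1 (Nat.lt_succ_iff.1 (Finset.mem_range.1 hk))
      have h3 : ‖cf k - Q.coeff k‖ ≤ η := (hcf2 k).le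
      have h4 : (0:ℝ) ≤ ‖w‖ ^ k := by positivity
      calc ‖cf k - Q.coeff k‖ * ‖w‖ ^ k ≤ η * ‖w‖ ^ k :=
            mul_le_mul_of_nonneg_right h3 h4
        _ ≤ η * M' ^ d := mul_le_mul_of_nonneg_left (h1.trans h2) hη0.le
    calc ‖∑ k ∈ Finset.range (d + 1), (cf k * w ^ k - Q.coeff k * w ^ k)‖
        ≤ ∑ k ∈ Finset.range (d + 1), ‖cf k * w ^ k - Q.coeff k * w ^ k‖ :=
          norm_sum_le _ _
      _ ≤ ∑ _k ∈ Finset.range (d + 1), η * M' ^ d := Finset.sum_le_sum hbound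
      _ = (d + 1 : ℝ) * (η * M' ^ d) := by
          rw [Finset.sum_const, Finset.card_range]; push_cast; ring
      _ = ε / 2 := by
          rw [hη]; field_simp; ring
      _ < ε := by linarith

-- Key lemma: rational polynomials in L approximate holomorphic functions on compacts
lemma exists_ratPoly_approx {z₀ : ℂ} {r : ℝ} {L : ℂ → ℂ}
    (hL : ContinuousOn L (ball z₀ r))
    (hexp : ∀ z ∈ ball z₀ r, Complex.exp (L z) = z)
    {g : ℂ → ℂ} (hg : DifferentiableOn ℂ g (ball z₀ r))
    {K : Set ℂ} (hK : IsCompact K) (hKs : K ⊆ ball z₀ r) {ε : ℝ} (hε : 0 < ε) :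
    ∃ P : Polynomial ℂ, RatCoeff P ∧ ∀ z ∈ K, ‖P.eval (L z) - g z‖ < ε := by
  -- Q approximates g on K
  obtain ⟨Q, hQ⟩ := exists_poly_approx hg hK hKs (by positivity : 0 < ε / 4)
  -- S = L '' K is compact
  have hS : IsCompact (L '' K) := hK.image_of_continuousOn (hL.mono hKs)
  -- C is a compact neighbourhood of K; Q.eval is uniformly continuous on it
  have hC : IsCompact (cthickening 1 K) := hK.cthickening
  have huc := hC.uniformContinuousOn_of_continuous (Q.continuous_aeval).continuousOn
  rw [Metric.uniformContinuousOn_iff] at huc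
  obtain ⟨δ₀, hδ₀, hucd⟩ := huc (ε / 4) (by positivity)
  set δ : ℝ := min δ₀ 1 with hδdef
  have hδ0 : 0 < δ := lt_min hδ₀ one_pos
  -- E approximates exp on S
  obtain ⟨E, hE⟩ := exists_poly_approx_exp hS hδ0
  -- M bounds S
  obtain ⟨M, hM⟩ := hS.isBounded.exists_norm_le
  -- P approximates Q.comp E on S with rational coefficients
  obtain ⟨P, hPrat, hP⟩ := exists_ratCoeff_approx (Q.comp E) hM
    (by positivity : 0 < ε / 2)
  refine ⟨P, hPrat, fun z hz => ?_⟩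
  set w := L z with hw
  have hwS : w ∈ L '' K := ⟨z, hz, rfl⟩
  have hez : Complex.exp w = z := hexp z (hKs hz)
  have hEw : ‖E.eval w - z‖ < δ := by rw [← hez]; exact hE w hwS
  have hzC : z ∈ cthickening 1 K := self_subset_cthickening K hz
  have hEC : E.eval w ∈ cthickening 1 K := by
    apply mem_cthickening_of_dist_le (E.eval w) z 1 K hz
    rw [dist_eq_norm]
    exact hEw.le.trans (min_le_right δ₀ 1)
  have hdist : dist (E.eval w) z < δ₀ := by
    rw [dist_eq_norm]
    exact hEw.trans_le (min_le_left δ₀ 1)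
  have h2 : ‖Q.eval (E.eval w) - Q.eval z‖ < ε / 4 := by
    have := hucd (E.eval w) hEC z hzC hdist
    simpa [dist_eq_norm, Polynomial.aeval_def, Polynomial.eval₂_eq_eval_map] using this
  have h1 : ‖P.eval w - Q.eval (E.eval w)‖ < ε / 2 := by
    have := hP w hwS
    rwa [Polynomial.eval_comp] at this
  have h3 : ‖Q.eval z - g z‖ < ε / 4 := hQ z hz
  calc ‖P.eval w - g z‖
      = ‖(P.eval w - Q.eval (E.eval w)) + ((Q.eval (E.eval w) - Q.eval z)
          + (Q.eval z - g z))‖ := by ring_nf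
    _ ≤ ‖P.eval w - Q.eval (E.eval w)‖ + ‖(Q.eval (E.eval w) - Q.eval z)
          + (Q.eval z - g z)‖ := norm_add_le _ _
    _ ≤ ‖P.eval w - Q.eval (E.eval w)‖ + (‖Q.eval (E.eval w) - Q.eval z‖
          + ‖Q.eval z - g z‖) := by gcongr; exact norm_add_le _ _
    _ < ε / 2 + (ε / 4 + ε / 4) := by gcongr
    _ = ε := by ring

theorem A_eq_S (z₀ : ℂ) (r : ℝ) (hr : 0 < r) (h0 : (0 : ℂ) ∉ ball z₀ r)
    (L : ℂ → ℂ) (hL : DifferentiableOn ℂ L (ball z₀ r))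
    (hexp : ∀ z ∈ ball z₀ r, Complex.exp (L z) = z) :
    -- `A = ⋂_{m,j,s} A(m,j,s)`, where membership of `f` in `A(m,j,s)` says that some
    -- `T_n(f)` is within `1/s` of `P_j ∘ log` on `D_m = closedBall z₀ (r(1-1/m))`
    {f : ℂ → ℂ | DifferentiableOn ℂ f (ball z₀ r) ∧
      ∀ m : ℕ, 1 ≤ m → ∀ P : Polynomial ℂ, RatCoeff P → ∀ s : ℕ, 1 ≤ s →
        ∃ n : ℕ, ∀ z ∈ closedBall z₀ (r * (1 - 1 / (m : ℝ))),
          ‖T n f z - P.eval (L z)‖ < 1 / (s : ℝ)} =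
    -- `S(D(z₀,r))`: the set of `f` for which `{T_N(f) : N ∈ ℕ}` is dense in `H(D(z₀,r))`
    {f : ℂ → ℂ | DifferentiableOn ℂ f (ball z₀ r) ∧
      ∀ g : ℂ → ℂ, DifferentiableOn ℂ g (ball z₀ r) →
        ∀ K : Set ℂ, IsCompact K → K ⊆ ball z₀ r → ∀ ε : ℝ, 0 < ε →
          ∃ N : ℕ, ∀ z ∈ K, ‖T N f z - g z‖ < ε} := by
  ext f
  simp only [Set.mem_setOf_eq]
  constructor
  · -- A ⊆ S
    rintro ⟨hf, hA⟩
    refine ⟨hf, fun g hg K hK hKs ε hε => ?_⟩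
    rcases K.eq_empty_or_nonempty with hKe | hne
    · exact ⟨0, by simp [hKe]⟩
    -- approximate g by a rational polynomial in L
    obtain ⟨P, hPrat, hP⟩ := exists_ratPoly_approx hL.continuousOn hexp hg hK hKs
      (by positivity : 0 < ε / 2)
    -- choose m with K ⊆ closedBall z₀ (r(1-1/m))
    obtain ⟨zm, hzm, hmax⟩ := hK.exists_isMaxOn hne
      ((continuous_id.dist continuous_const).continuousOn)
    set d : ℝ := dist zm z₀ with hd
    have hd0 : 0 ≤ d := dist_nonneg
    have hdr : d < r := mem_ball.1 (hKs hzm)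
    set m : ℕ := ⌈r / (r - d)⌉₊ + 1 with hmdef
    have hm1 : 1 ≤ m := Nat.le_add_left 1 _
    have hmge : r / (r - d) ≤ (m : ℝ) := by
      calc r / (r - d) ≤ (⌈r / (r - d)⌉₊ : ℝ) := Nat.le_ceil _
        _ ≤ (m : ℝ) := by exact_mod_cast Nat.le_succ _
    have hm0 : (0:ℝ) < (m : ℝ) := by exact_mod_cast hm1
    have hrd : 0 < r - d := by linarith
    have hdiv : r / (m : ℝ) ≤ r - d := by
      rw [div_le_iff₀ hm0]
      calc r ≤ (r / (r - d)) * (r - d) := by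
            rw [div_mul_cancel₀ _ (ne_of_gt hrd)]
        _ ≤ (m : ℝ) * (r - d) := mul_le_mul_of_nonneg_right hmge hrd.le
        _ = (r - d) * (m : ℝ) := mul_comm _ _
    have hKsub : K ⊆ closedBall z₀ (r * (1 - 1 / (m:ℝ))) := by
      intro z hz
      have hle : dist z z₀ ≤ d := isMaxOn_iff.1 hmax z hz
      have : r * (1 - 1 / (m:ℝ)) = r - r / (m:ℝ) := by ring
      rw [mem_closedBall, this]
      linarith
    -- choose s with 1/s < ε/2
    set s : ℕ := ⌈2 / ε⌉₊ + 1 with hsdef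
    have hs1 : 1 ≤ s := Nat.le_add_left 1 _
    have hs0 : (0:ℝ) < (s : ℝ) := by exact_mod_cast hs1
    have hsge : 2 / ε < (s : ℝ) := by
      calc 2 / ε ≤ (⌈2 / ε⌉₊ : ℝ) := Nat.le_ceil _
        _ < (s : ℝ) := by exact_mod_cast Nat.lt_succ_self _
    have hsε : 1 / (s : ℝ) < ε / 2 := by
      rw [div_lt_div_iff₀ hs0 (by norm_num : (0:ℝ) < 2)]
      rw [div_lt_iff₀ hε] at hsge
      nlinarith
    obtain ⟨n, hn⟩ := hA m hm1 P hPrat s hs1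
    refine ⟨n, fun z hz => ?_⟩
    have h1 : ‖T n f z - P.eval (L z)‖ < 1 / (s:ℝ) := hn z (hKsub hz)
    have h2 : ‖P.eval (L z) - g z‖ < ε / 2 := hP z hz
    calc ‖T n f z - g z‖
        = ‖(T n f z - P.eval (L z)) + (P.eval (L z) - g z)‖ := by ring_nf
      _ ≤ ‖T n f z - P.eval (L z)‖ + ‖P.eval (L z) - g z‖ := norm_add_le _ _
      _ < 1 / (s:ℝ) + ε / 2 := by gcongr
      _ < ε := by linarith
  · -- S ⊆ A
    rintro ⟨hf, hS⟩
    refine ⟨hf, fun m hm P hPrat s hs => ?_⟩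
    have hms : (0:ℝ) < 1 / (m:ℝ) := by
      have : (0:ℝ) < (m:ℝ) := by exact_mod_cast hm
      positivity
    have hrad : r * (1 - 1 / (m:ℝ)) < r := by nlinarith
    have hsub : closedBall z₀ (r * (1 - 1 / (m:ℝ))) ⊆ ball z₀ r :=
      closedBall_subset_ball hrad
    have hgdiff : DifferentiableOn ℂ (fun z => P.eval (L z)) (ball z₀ r) :=
      (Polynomial.differentiable P).comp_differentiableOn hL
    have hsε : (0:ℝ) < 1 / (s:ℝ) := by
      have : (0:ℝ) < (s:ℝ) := by exact_mod_cast hs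
      positivity
    obtain ⟨N, hN⟩ := hS _ hgdiff _ (isCompact_closedBall z₀ _) hsub _ hsε
    exact ⟨N, hN⟩
end
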